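/- arXiv:2212.03006 — 8 statements merged into one kernel-verified Lean document; each statement's English description precedes it below -/
import Mathlib

section
/- Let d ≥ 1 be an integer, R a commutative ring, a ∈ R with a^{d+1} = 1, and μ, λ ∈ R. Define the d×d matrix X over R with rows and columns labelled by i, j ∈ {1, …, d} by X i j = (if i = j then −μ else λ) + (if i + j = d+1 then a^i else 0). Then for every row index i ∈ {1, …, d}: ∑_{j=1}^{d} X i j · (a^j + μ + λ) = (μ + λ)·((d−1)·λ − μ) + 1 + λ·s, where s = ∑_{k=1}^{d} a^k. (Equivalently, the block-linear system X·v = x·(1,…,1)ᵗ is solved by v = (a^i + μ + λ)_{i=1}^{d}, with x = (μ+λ)((d−1)λ−μ) + 1 + λs.) -/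
/-- Solution of the block-linear system `X · v = x · (1,…,1)ᵗ`: for a commutative ring `R`,
`a ∈ R` with `a^(d+1) = 1`, and the `d × d` matrix `X` with rows and columns labelled by
`{1, …, d}` given by `X i j = (if i = j then -μ else λ) + (if i + j = d+1 then a^i else 0)`,
every row `i` satisfies `∑ j, X i j · (a^j + μ + λ) = (μ+λ)((d-1)λ - μ) + 1 + λ·s`, where
`s = ∑_{k=1}^d a^k`. -/
theorem row_sum_X_system (d : ℕ) (hd : 1 ≤ d) (R : Type*) [CommRing R]
    (a : R) (ha : a ^ (d + 1) = 1) (μ lam : R)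
    (X : Matrix (Fin d) (Fin d) R)
    (hX : ∀ i j : Fin d, X i j =
      (if i = j then -μ else lam) +
      (if (i.val + 1) + (j.val + 1) = d + 1 then a ^ (i.val + 1) else 0))
    (s : R) (hs : s = ∑ k ∈ Finset.Icc 1 d, a ^ k) :
    ∀ i : Fin d, ∑ j : Fin d, X i j * (a ^ (j.val + 1) + μ + lam) =
      (μ + lam) * (((d : R) - 1) * lam - μ) + 1 + lam * s := by
  intro i
  have hiv : i.val < d := i.isLt
  set j0 : Fin d := ⟨d - 1 - i.val, by omega⟩ with hj0
  have hcond : ∀ j : Fin d, ((i.val + 1) + (j.val + 1) = d + 1) ↔ j = j0 := by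
    intro j
    rw [Fin.ext_iff]
    have := j.isLt
    simp only [hj0]
    omega
  have key : ∀ j : Fin d, X i j * (a ^ (j.val + 1) + μ + lam)
      = lam * (a ^ (j.val + 1) + μ + lam)
        + (if j = i then -(μ + lam) * (a ^ (j.val + 1) + μ + lam) else 0)
        + (if j = j0 then a ^ (i.val + 1) * (a ^ (j.val + 1) + μ + lam) else 0) := by
    intro j
    rw [hX]
    simp only [hcond j, @eq_comm _ i]
    split_ifs with h1 h2 <;> ring
  simp only [key]
  rw [Finset.sum_add_distrib, Finset.sum_add_distrib,
    Finset.sum_ite_eq' Finset.univ i, Finset.sum_ite_eq' Finset.univ j0]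
  simp only [Finset.mem_univ, if_true]
  have hv : ∑ j : Fin d, a ^ (j.val + 1) = s := by
    rw [hs, show Finset.Icc 1 d = Finset.Ico 1 (d + 1) by rw [Finset.Ico_add_one_right_eq_Icc],
      Finset.sum_Ico_eq_sum_range, Fin.sum_univ_eq_sum_range (fun k => a ^ (k + 1)) d]
    simp only [Nat.add_sub_cancel]
    exact Finset.sum_congr rfl fun k _ => by rw [add_comm]
  have hsum : ∑ j : Fin d, lam * (a ^ (j.val + 1) + μ + lam)
      = lam * (s + (d : R) * (μ + lam)) := by
    rw [← Finset.mul_sum]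
    congr 1
    rw [Finset.sum_add_distrib, Finset.sum_add_distrib, hv, Finset.sum_const,
      Finset.sum_const, Finset.card_univ, Fintype.card_fin, nsmul_eq_mul, nsmul_eq_mul]
    ring
  rw [hsum]
  have hj0v : j0.val + 1 = d - i.val := by simp only [hj0]; omega
  rw [hj0v]
  have hone : a ^ (i.val + 1) * a ^ (d - i.val) = 1 := by
    rw [← pow_add]
    have : i.val + 1 + (d - i.val) = d + 1 := by omega
    rw [this, ha]
  linear_combination hone
end

section
/- Let d ≥ 1 be an integer, R a commutative ring, a ∈ R with a^{d+1} = 1, and μ, λ ∈ R. Set s = ∑_{k=1}^{d} a^k, α = (μ+λ)·((d−1)·λ − μ) + 1 − λ, and x = (μ+λ)·((d−1)·λ − μ) + 1 + λ·s (so x = α + λ + λ·s). Then: (i) x · ((α + d·λ)·1 − λ·s) = α·(α + (d+1)·λ)·1; and (ii) ((α + d·λ)·1 − λ·s) · (s + d·(μ+λ)·1) = ((α + d·λ)·d·(μ+λ) − d·λ)·1 + (α + λ − d·λ·(μ+λ))·s. (In particular, when α(α+(d+1)λ) is invertible, x⁻¹ = (α(α+(d+1)λ))⁻¹·((α+dλ)·1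 − λ·s) and x⁻¹·(s + d(μ+λ)) = (α(α+(d+1)λ))⁻¹·(((α+dλ)d(μ+λ) − dλ)·1 + (α + λ − dλ(μ+λ))·s).) -/
/-- Identities in the group algebra of the cyclic group of order `d+1` used to compute
the inverse of `x = α + λ + λ·s` and the matrix coronal: for a commutative ring `R`,
`a ∈ R` with `a^(d+1) = 1`, `s = ∑_{k=1}^d a^k`, `α = (μ+λ)((d-1)λ-μ) + 1 - λ` and
`x = (μ+λ)((d-1)λ-μ) + 1 + λ·s`, one has
(i) `x·((α+dλ) - λs) = α·(α+(d+1)λ)` and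
(ii) `((α+dλ) - λs)·(s + d(μ+λ)) = ((α+dλ)d(μ+λ) - dλ) + (α + λ - dλ(μ+λ))·s`. -/
theorem cyclic_algebra_inverse_identities (d : ℕ) (hd : 1 ≤ d) (R : Type*) [CommRing R]
    (a : R) (ha : a ^ (d + 1) = 1) (μ lam : R)
    (s : R) (hs : s = ∑ k ∈ Finset.Icc 1 d, a ^ k)
    (α : R) (hα : α = (μ + lam) * (((d : R) - 1) * lam - μ) + 1 - lam)
    (x : R) (hx : x = (μ + lam) * (((d : R) - 1) * lam - μ) + 1 + lam * s) :
    x * ((α + (d : R) * lam) - lam * s) = α * (α + ((d : R) + 1) * lam) ∧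
    ((α + (d : R) * lam) - lam * s) * (s + (d : R) * (μ + lam)) =
      ((α + (d : R) * lam) * (d : R) * (μ + lam) - (d : R) * lam) +
        (α + lam - (d : R) * lam * (μ + lam)) * s := by
  have key : 1 + s = ∑ i ∈ Finset.range (d + 1), a ^ i := by
    rw [hs, Finset.range_eq_Ico,
      Finset.sum_eq_sum_Ico_succ_bot (Nat.succ_pos d), Nat.succ_eq_add_one, Finset.Ico_add_one_right_eq_Icc]
    simp
  have h1 : (1 + s) * (a - 1) = 0 := by
    rw [key, geom_sum_mul, ha, sub_self]
  have h2 : ∀ k : ℕ, (1 + s) * a ^ k = 1 + s := by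
    intro k
    induction k with
    | zero => ring
    | succ n ih => rw [pow_succ, ← mul_assoc, ih]; linear_combination h1
  have h3 : (1 + s) * s = (d : R) * (1 + s) := by
    calc (1 + s) * s = ∑ k ∈ Finset.Icc 1 d, (1 + s) * a ^ k := by
          rw [hs, Finset.mul_sum]
      _ = ∑ _k ∈ Finset.Icc 1 d, (1 + s) := Finset.sum_congr rfl fun k _ => h2 k
      _ = (d : R) * (1 + s) := by
          rw [Finset.sum_const, Nat.card_Icc]; simp [nsmul_eq_mul]; ring
  have hs2 : s * s = (d : R) + ((d : R) - 1) * s := by linear_combination h3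
  subst hx hα
  constructor
  · linear_combination (-lam ^ 2) * hs2
  · linear_combination (-lam) * hs2
end

section
/- Fix an integer d ≥ 1 and let N = d+1. For n ≥ 0 define complex matrices indexed by words W_n = Fin n → Fin N as follows: a_n is the permutation matrix of the map adding 1 (mod N) to the first letter of a word; b_1 = I_N; and for n ≥ 2, identifying W_n ≅ Fin N × W_{n−1} and labelling the first coordinate by i ∈ {1,…,d+1}, b_n is the block matrix whose block at position (i, d+1−i) is a_{n−1}^i for i = 1,…,d, whose block at position (d+1, d+1) is b_{n−1}, and all of whose other blocks are 0. For μ, λ ∈ ℂ set Ξ_n(μ,λ) = λ•(J_{N} ⊗ I_{N^{n−1}}) + b_n − (λ+μ)•I_{N^n}, where J_N ⊗ I means the block all-ones matrix with identity blocks. Let X be the principal submatrix of Ξ_n(μ,λ) on the block rows and columns with labels i ∈ {1,…,d}. Set α = (μ+λ)((d−1)λ − μ) + 1 − λ and suppose det X ≠ 0 and α(α + (d+1)λ) ≠ 0. Define μ′ = μ + (λ²/(α(α+(d+1)λ)))·((α+dλ)·d·(μ+λ) − dλ) and λ′ = −(λ²/(α(α+(d+1)λ)))·(α + λ − dλ(μ+λ)).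 Then for every n ≥ 2: det Ξ_n(μ,λ) = det X · det Ξ_{n−1}(μ′, λ′). -/
set_option maxHeartbeats 2000000


open Matrix
open Fin.NatCast

namespace ConeSubdivisionSchreier

variable (d : ℕ)

/-- Words of length `n` over the alphabet `Fin (d+1)`. -/
abbrev W (n : ℕ) : Type := Fin n → Fin (d + 1)

/-- The map adding `1 (mod d+1)` to the first letter of a word. -/
def addFirst {n : ℕ} (w : W d n) : W d n :=
  fun i => if i.val = 0 then w i + 1 else w i

/-- The permutation matrix `a_n` of `addFirst`. -/
def aMat (n : ℕ) : Matrix (W d n) (W d n) ℂ :=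
  fun w w' => if w' = addFirst d w then 1 else 0

/-- Tail of a word of length `n+1`. -/
def tail {n : ℕ} (w : W d (n + 1)) : W d n := fun i => w i.succ

/-- The recursively defined matrices `b_n`: `b_1 = I`, and for `n ≥ 2`, in the block
decomposition along the first letter (block labels `i = (first letter) + 1 ∈ {1,…,d+1}`),
the block at position `(i, d+1-i)` is `a_{n-1}^i` for `i ∈ {1,…,d}`, the block at
position `(d+1, d+1)` is `b_{n-1}`, and all other blocks vanish. -/
def bMat : (n : ℕ) → Matrix (W d n) (W d n) ℂ
  | 0 => 1
  | 1 => 1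
  | (n + 2) => fun w w' =>
      if ((w 0).val + 1) + ((w' 0).val + 1) = d + 1 then
        (aMat d (n + 1) ^ ((w 0).val + 1)) (tail d w) (tail d w')
      else if (w 0).val = d ∧ (w' 0).val = d then
        bMat (n + 1) (tail d w) (tail d w')
      else 0

/-- The block all-ones matrix with identity blocks, `J_N ⊗ I_{N^{n-1}}`: entry `(w, w')`
is `1` iff `w` and `w'` agree except possibly in the first letter. -/
def JI (n : ℕ) : Matrix (W d n) (W d n) ℂ :=
  fun w w' => if ∀ i : Fin n, i.val ≠ 0 → w i = w' i then 1 else 0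

/-- The two-parameter deformation `Ξ_n(μ,λ) = λ•(J_N ⊗ I) + b_n - (λ+μ)•I`. -/
def Xi (n : ℕ) (μ lam : ℂ) : Matrix (W d n) (W d n) ℂ :=
  lam • JI d n + bMat d n - (lam + μ) • 1

/-- The principal submatrix of `Ξ_n(μ,λ)` on the block rows and columns with labels in
`{1,…,d}`, i.e. on words whose first letter has value `< d`. -/
def Xsub (n : ℕ) (hn : 0 < n) (μ lam : ℂ) :
    Matrix {w : W d n // (w ⟨0, hn⟩).val < d} {w : W d n // (w ⟨0, hn⟩).val < d} ℂ :=
  (Xi d n μ lam).submatrix Subtype.val Subtype.val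

/-! ### Auxiliary lemmas -/

lemma tail_cons {n : ℕ} (x : Fin (d+1)) (u : W d n) : tail d (Fin.cons x u) = u := by
  funext i; simp [tail, Fin.cons_succ]

lemma cons_tail {n : ℕ} (w : W d (n+1)) : Fin.cons (w 0) (tail d w) = w :=
  Fin.cons_self_tail w

lemma JI_apply {n : ℕ} (w w' : W d (n+1)) :
    JI d (n+1) w w' = if tail d w = tail d w' then 1 else 0 := by
  have h : (∀ i : Fin (n+1), i.val ≠ 0 → w i = w' i) ↔ tail d w = tail d w' := by
    constructor
    · intro h; funext i; exact h i.succ (by simp)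
    · intro h i hi
      cases i using Fin.cases with
      | zero => simp at hi
      | succ j => exact congrFun h j
  simp only [JI, h]

def addK (k : ℕ) {n : ℕ} (w : W d n) : W d n :=
  fun i => if i.val = 0 then w i + (k : Fin (d+1)) else w i

lemma addK_zero {n : ℕ} (w : W d n) : addK d 0 w = w := by
  funext i; simp [addK]

lemma addFirst_addK (k : ℕ) {n : ℕ} (w : W d n) :
    addFirst d (addK d k w) = addK d (k+1) w := by
  funext i
  by_cases h : i.val = 0 <;> simp [addFirst, addK, h]
  rw [add_assoc]

lemma tail_addK (k : ℕ) {n : ℕ} (w : W d (n+1)) : tail d (addK d k w) = tail d w := by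
  funext i; simp [tail, addK, Fin.val_succ]

lemma aMat_pow {n : ℕ} (k : ℕ) :
    aMat d n ^ k = fun w w' => if w' = addK d k w then 1 else 0 := by
  induction k with
  | zero =>
    funext w w'
    simp [pow_zero, one_apply, addK_zero, eq_comm]
  | succ k ih =>
    funext w w''
    rw [pow_succ]
    show (aMat d n ^ k * aMat d n) w w'' = _
    rw [mul_apply]
    simp only [ih, aMat, ite_mul, one_mul, zero_mul]
    rw [Finset.sum_ite_eq' Finset.univ (addK d k w)
      (fun v => if w'' = addFirst d v then (1:ℂ) else 0)]
    simp [addFirst_addK]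

lemma aMat_pow_card {n : ℕ} : aMat d n ^ (d+1) = 1 := by
  have hadd : ∀ w : W d n, addK d (d+1) w = w := by
    intro w; funext i
    by_cases h : i.val = 0 <;> simp [addK, h, Fin.natCast_self]
  funext w w'
  rw [aMat_pow]
  simp [hadd, one_apply, eq_comm]

lemma aMat_pow_mul_JI {n : ℕ} (k : ℕ) :
    aMat d (n+1) ^ k * JI d (n+1) = JI d (n+1) := by
  funext w w'
  rw [mul_apply, aMat_pow]
  simp only [ite_mul, one_mul, zero_mul]
  rw [Finset.sum_ite_eq' Finset.univ (addK d k w) (fun v => JI d (n+1) v w')]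
  simp only [Finset.mem_univ, if_true]
  rw [JI_apply, JI_apply, tail_addK]

lemma eq_addK_iff {n : ℕ} (w w' : W d (n+1)) (t : Fin (d+1)) :
    w' = addK d t.val w ↔ (t = w' 0 - w 0 ∧ tail d w = tail d w') := by
  constructor
  · rintro rfl
    refine ⟨?_, (tail_addK d t.val w).symm⟩
    simp [addK, Fin.cast_val_eq_self]
  · rintro ⟨rfl, hte⟩
    funext i
    cases i using Fin.cases with
    | zero => simp [addK, Fin.cast_val_eq_self]
    | succ j =>
      simp only [addK, Fin.val_succ]
      simpa [tail] using (congrFun hte j).symm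

lemma sum_aMat_pow {n : ℕ} :
    ∑ t : Fin (d+1), aMat d (n+1) ^ (t.val) = JI d (n+1) := by
  funext w w'
  rw [Matrix.sum_apply]
  simp only [aMat_pow]
  have h : ∀ t : Fin (d+1),
      (if w' = addK d t.val w then (1:ℂ) else 0)
      = if t = w' 0 - w 0 then (if tail d w = tail d w' then (1:ℂ) else 0) else 0 := by
    intro t
    by_cases h1 : t = w' 0 - w 0 <;> by_cases h2 : tail d w = tail d w' <;>
      simp [eq_addK_iff, h1, h2]
  simp only [h]
  rw [Finset.sum_ite_eq' Finset.univ (w' 0 - w 0)]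
  simp [JI_apply]

lemma sum_aMat_pow' {n : ℕ} :
    ∑ i : Fin d, aMat d (n+1) ^ (i.val + 1) = JI d (n+1) - 1 := by
  have h := sum_aMat_pow d (n := n)
  rw [Fin.sum_univ_succ] at h
  simp only [Fin.val_zero, pow_zero, Fin.val_succ] at h
  rw [← h]
  abel

/-! ### Block machinery -/

def colB {m : ℕ} (f : Fin d → Matrix (W d m) (W d m) ℂ) :
    Matrix (Fin d × W d m) (W d m) ℂ := fun p u' => f p.1 p.2 u'

def rowB {m : ℕ} (g : Fin d → Matrix (W d m) (W d m) ℂ) :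
    Matrix (W d m) (Fin d × W d m) ℂ := fun u q => g q.1 u q.2

def blkB {m : ℕ} (h : Fin d → Fin d → Matrix (W d m) (W d m) ℂ) :
    Matrix (Fin d × W d m) (Fin d × W d m) ℂ := fun p q => h p.1 q.1 p.2 q.2

lemma blkB_mul_colB {m : ℕ} (h : Fin d → Fin d → Matrix (W d m) (W d m) ℂ)
    (f : Fin d → Matrix (W d m) (W d m) ℂ) :
    blkB d h * colB d f = colB d (fun i => ∑ i' : Fin d, h i i' * f i') := by
  ext ⟨i, u⟩ u'
  rw [mul_apply, Fintype.sum_prod_type]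
  simp only [colB, blkB, Matrix.sum_apply, mul_apply]

lemma rowB_mul_colB {m : ℕ} (g : Fin d → Matrix (W d m) (W d m) ℂ)
    (f : Fin d → Matrix (W d m) (W d m) ℂ) :
    rowB d g * colB d f = ∑ i' : Fin d, g i' * f i' := by
  ext u u'
  rw [mul_apply, Fintype.sum_prod_type]
  simp only [colB, rowB, Matrix.sum_apply, mul_apply]

def g1 (m : ℕ) : Fin d × W d (m+1) → W d (m+2) := fun p => Fin.cons (Fin.castSucc p.1) p.2

def g2 (m : ℕ) : W d (m+1) → W d (m+2) := fun u => Fin.cons (Fin.last d) u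

def splitEquiv (m : ℕ) : (Fin d × W d (m+1)) ⊕ W d (m+1) ≃ W d (m+2) where
  toFun := Sum.elim (g1 d m) (g2 d m)
  invFun w := if h : (w 0).val < d then Sum.inl (⟨(w 0).val, h⟩, tail d w) else Sum.inr (tail d w)
  left_inv p := by
    rcases p with ⟨i, u⟩ | u
    · have h0 : (g1 d m (i, u)) 0 = Fin.castSucc i := by simp [g1]
      simp [h0, i.isLt, g1, tail_cons]
    · have h0 : (g2 d m u) 0 = Fin.last d := by simp [g2]
      simp [h0, g2, tail_cons]
  right_inv w := by
    by_cases h : (w 0).val < d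
    · simp only [h, dif_pos]
      simp only [Sum.elim_inl, g1]
      rw [show Fin.castSucc ⟨(w 0).val, h⟩ = w 0 from Fin.ext rfl, cons_tail]
    · simp only [h, dif_neg, not_false_iff]
      simp only [Sum.elim_inr, g2]
      have h2 : Fin.last d = w 0 := by
        have := (w 0).isLt; apply Fin.ext; simp; omega
      rw [h2, cons_tail]

/-! ### Entry computations -/

lemma Xi_apply_cons {m : ℕ} (μ lam : ℂ) (x x' : Fin (d+1)) (u u' : W d (m+1)) :
    Xi d (m+2) μ lam (Fin.cons x u) (Fin.cons x' u')
    = lam * (if u = u' then 1 else 0)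
      + (if (x.val + 1) + (x'.val + 1) = d + 1 then
          (aMat d (m+1) ^ (x.val + 1)) u u'
        else if x.val = d ∧ x'.val = d then bMat d (m+1) u u' else 0)
      - (lam + μ) * (if x = x' ∧ u = u' then 1 else 0) := by
  simp only [Xi, Matrix.sub_apply, Matrix.add_apply, Matrix.smul_apply, smul_eq_mul,
    Matrix.one_apply]
  rw [JI_apply]
  simp only [tail_cons, Fin.cons_zero, Fin.cons_inj]
  rfl

lemma Xi_B {m : ℕ} (μ lam : ℂ) :
    (Xi d (m+2) μ lam).submatrix (g1 d m) (g2 d m)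
      = colB d (fun _ => lam • (1 : Matrix (W d (m+1)) (W d (m+1)) ℂ)) := by
  ext ⟨i, u⟩ u'
  rw [Matrix.submatrix_apply, g1, g2, Xi_apply_cons]
  have h1 : ¬ ((Fin.castSucc i).val + 1 + ((Fin.last d).val + 1) = d + 1) := by
    simp only [Fin.val_last, Fin.coe_castSucc]; omega
  have h2 : ¬ ((Fin.castSucc i).val = d) := by simp; omega
  have h3 : ¬ (Fin.castSucc i = Fin.last d) := by
    intro h; exact h2 (by rw [h]; simp)
  have h4 : (i : ℕ) ≠ d := by have := i.isLt; omega
  simp [h1, h2, h3, h4, colB, Matrix.one_apply]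

lemma Xi_C {m : ℕ} (μ lam : ℂ) :
    (Xi d (m+2) μ lam).submatrix (g2 d m) (g1 d m)
      = rowB d (fun _ => lam • (1 : Matrix (W d (m+1)) (W d (m+1)) ℂ)) := by
  ext u ⟨i', u'⟩
  rw [Matrix.submatrix_apply, g1, g2, Xi_apply_cons]
  have h1 : ¬ ((Fin.last d).val + 1 + ((Fin.castSucc i').val + 1) = d + 1) := by
    simp only [Fin.val_last, Fin.coe_castSucc]; omega
  have h2 : ¬ ((Fin.castSucc i').val = d) := by simp; omega
  have h3 : ¬ (Fin.last d = Fin.castSucc i') := by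
    intro h; exact h2 (by rw [← h]; simp)
  have h4 : (i' : ℕ) ≠ d := by have := i'.isLt; omega
  simp [h1, h2, h3, h4, rowB, Matrix.one_apply]

lemma Xi_D {m : ℕ} (μ lam : ℂ) :
    (Xi d (m+2) μ lam).submatrix (g2 d m) (g2 d m)
      = bMat d (m+1) - μ • (1 : Matrix (W d (m+1)) (W d (m+1)) ℂ) := by
  ext u u'
  rw [Matrix.submatrix_apply, g2, g2, Xi_apply_cons]
  have h1 : ¬ ((Fin.last d).val + 1 + ((Fin.last d).val + 1) = d + 1) := by
    simp [Fin.val_last]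
  simp only [h1, if_false, Fin.val_last, and_self, if_true, true_and,
    Matrix.sub_apply, Matrix.smul_apply, smul_eq_mul, Matrix.one_apply]
  by_cases h : u = u' <;> simp [h] <;> ring

lemma Xi_A {m : ℕ} (μ lam : ℂ) :
    (Xi d (m+2) μ lam).submatrix (g1 d m) (g1 d m)
      = blkB d (fun i i' =>
          lam • (1 : Matrix (W d (m+1)) (W d (m+1)) ℂ)
          + (if i = i' then (-(lam+μ)) • (1 : Matrix (W d (m+1)) (W d (m+1)) ℂ) else 0)
          + (if (i.val + 1) + (i'.val + 1) = d + 1 then aMat d (m+1) ^ (i.val + 1) else 0)) := by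
  ext ⟨i, u⟩ ⟨i', u'⟩
  rw [Matrix.submatrix_apply, g1, g1, Xi_apply_cons]
  have h2 : ¬ ((Fin.castSucc i).val = d) := by simp; omega
  have hcast : Fin.castSucc i = Fin.castSucc i' ↔ i = i' := by
    constructor
    · intro h; exact Fin.castSucc_injective d h
    · rintro rfl; rfl
  have hi := i.isLt
  have hi' := i'.isLt
  simp only [blkB, Matrix.add_apply, Matrix.smul_apply, smul_eq_mul, Matrix.one_apply,
    Fin.coe_castSucc, hcast]
  split_ifs <;>
    first
      | omega
      | tauto
      | (simp only [Matrix.smul_apply, Matrix.one_apply, Matrix.zero_apply, smul_eq_mul] <;>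
          (try split_ifs) <;> first | ring | tauto)

/-! ### The main theorem -/

/-- **Spectral decimation recursion for the cone subdivision.** For `n ≥ 2`, with
`α = (μ+λ)((d-1)λ - μ) + 1 - λ`, `α(α + (d+1)λ) ≠ 0`, `det X ≠ 0`, and the renormalized
parameters `μ'`, `λ'`, one has `det Ξ_n(μ,λ) = det X · det Ξ_{n-1}(μ',λ')`. -/
theorem det_Xi_recursion (hd : 1 ≤ d) (μ lam : ℂ)
    (α : ℂ) (hα : α = (μ + lam) * (((d : ℂ) - 1) * lam - μ) + 1 - lam)
    (hden : α * (α + ((d : ℂ) + 1) * lam) ≠ 0)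
    (μ' lam' : ℂ)
    (hμ' : μ' = μ + lam ^ 2 / (α * (α + ((d : ℂ) + 1) * lam)) *
      ((α + (d : ℂ) * lam) * (d : ℂ) * (μ + lam) - (d : ℂ) * lam))
    (hlam' : lam' = -(lam ^ 2 / (α * (α + ((d : ℂ) + 1) * lam)) *
      (α + lam - (d : ℂ) * lam * (μ + lam))))
    (n : ℕ) (hn : 2 ≤ n)
    (hX : (Xsub d n (by omega) μ lam).det ≠ 0) :
    (Xi d n μ lam).det = (Xsub d n (by omega) μ lam).det * (Xi d (n - 1) μ' lam').det := by
  obtain ⟨m, rfl⟩ : ∃ m, n = m + 2 := ⟨n - 2, by omega⟩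
  subst hμ' hlam'
  have hα0 : α ≠ 0 := left_ne_zero_of_mul hden
  have hγ0 : α + ((d:ℂ) + 1) * lam ≠ 0 := right_ne_zero_of_mul hden
  have hαγ0 : α * (α + ((d:ℂ) + 1) * lam) ≠ 0 := hden
  -- abbreviations
  set M' := Matrix (W d (m+1)) (W d (m+1)) ℂ with hM'
  set a : M' := aMat d (m+1) with ha
  set j : M' := JI d (m+1) with hj
  -- the blocks
  set A := (Xi d (m+2) μ lam).submatrix (g1 d m) (g1 d m) with hAdef
  set B := (Xi d (m+2) μ lam).submatrix (g1 d m) (g2 d m) with hBdef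
  set C := (Xi d (m+2) μ lam).submatrix (g2 d m) (g1 d m) with hCdef
  set D := (Xi d (m+2) μ lam).submatrix (g2 d m) (g2 d m) with hDdef
  -- the explicit solution V of A * V = B
  set Vb : Fin d → M' := fun i' =>
    (lam * (lam + μ) / α) • (1 : M') + (lam / α) • (a ^ (i'.val + 1))
      - (lam ^ 2 * ((lam + μ) + 1) / (α * (α + ((d:ℂ) + 1) * lam))) • j with hVb
  -- sum of the Vb
  have hsumV : (∑ i' : Fin d, Vb i')
      = ((d : ℂ) * (lam * (lam + μ) / α)) • (1 : M')
        + (lam / α) • (j - 1)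
        - ((d : ℂ) * (lam ^ 2 * ((lam + μ) + 1) / (α * (α + ((d:ℂ) + 1) * lam)))) • j := by
    simp only [hVb]
    rw [Finset.sum_sub_distrib, Finset.sum_add_distrib, ← Finset.smul_sum, ← Finset.smul_sum,
      ← Finset.smul_sum, ha, sum_aMat_pow', ← hj, Finset.sum_const, Finset.sum_const,
      Finset.card_univ, Fintype.card_fin]
    match_scalars <;> ring
  -- A * V = B
  have key1 : ∀ i : Fin d,
      (∑ i' : Fin d,
        (lam • (1 : M')
          + (if i = i' then (-(lam+μ)) • (1 : M') else 0)
          + (if (i.val + 1) + (i'.val + 1) = d + 1 then aMat d (m+1) ^ (i.val + 1) else 0))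
        * Vb i') = lam • (1 : M') := by
    intro i
    have hi := i.isLt
    set istar : Fin d := ⟨d - 1 - i.val, by omega⟩ with histar
    have hcond : ∀ i' : Fin d, ((i.val + 1) + (i'.val + 1) = d + 1) = (i' = istar) := by
      intro i'
      have hi' := i'.isLt
      apply propext
      rw [Fin.ext_iff, histar]
      constructor <;> intro h <;> simp_all <;> omega
    have hexp : (i.val + 1) + (istar.val + 1) = d + 1 := by
      rw [histar]; simp; omega
    have hmul : aMat d (m+1) ^ (i.val + 1) * Vb istar
        = (lam * (lam + μ) / α) • (aMat d (m+1) ^ (i.val + 1)) + (lam / α) • (1 : M')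
          - (lam ^ 2 * ((lam + μ) + 1) / (α * (α + ((d:ℂ) + 1) * lam))) • j := by
      simp only [hVb]
      rw [mul_sub, mul_add, mul_smul_comm, mul_smul_comm, mul_smul_comm, mul_one, ha,
        ← pow_add, hexp, aMat_pow_card, hj, aMat_pow_mul_JI]
    simp only [add_mul, ite_mul, zero_mul, smul_mul_assoc, one_mul]
    rw [Finset.sum_add_distrib, Finset.sum_add_distrib]
    rw [Finset.sum_ite_eq]
    simp only [hcond]
    rw [Finset.sum_ite_eq']
    simp only [Finset.mem_univ, if_true]
    rw [← Finset.smul_sum, hsumV, hmul]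
    simp only [hVb]
    match_scalars
    all_goals try ring1
    all_goals field_simp [hα0, show α + lam * ((d:ℂ) + 1) ≠ 0 by rwa [mul_comm]]
    all_goals (rw [hα]; ring1)
  have hAV : A * colB d Vb = B := by
    rw [hAdef, hBdef, Xi_A, Xi_B, blkB_mul_colB]
    exact congrArg (colB d) (funext key1)
  -- invertibility of A
  have hψ : ∀ p : Fin d × W d (m+1), ((g1 d m p) ⟨0, by omega⟩).val < d := by
    rintro ⟨i, u⟩
    have h0 : (⟨0, by omega⟩ : Fin (m+2)) = 0 := by apply Fin.ext; simp
    rw [h0]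
    simpa [g1] using i.isLt
  set ψ : (Fin d × W d (m+1)) ≃ {w : W d (m+2) // (w ⟨0, by omega⟩).val < d} :=
    { toFun := fun p => ⟨g1 d m p, hψ p⟩
      invFun := fun s => (⟨(s.1 0).val, by
        have h0 : (⟨0, by omega⟩ : Fin (m+2)) = 0 := by apply Fin.ext; simp
        simpa [h0] using s.2⟩, tail d s.1)
      left_inv := by
        rintro ⟨i, u⟩
        have h0 : (g1 d m (i, u)) 0 = Fin.castSucc i := by simp [g1]
        simp only [h0, g1, tail_cons]
        exact Prod.ext (Fin.ext rfl) rfl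
      right_inv := by
        rintro ⟨w, h⟩
        apply Subtype.ext
        simp only [g1]
        rw [show Fin.castSucc ⟨(w 0).val, _⟩ = w 0 from Fin.ext rfl, cons_tail] } with hψdef
  have hdetA : A.det = (Xsub d (m+2) (by omega) μ lam).det := by
    have h : A = (Xsub d (m+2) (by omega) μ lam).submatrix ψ ψ := by
      ext ⟨i, u⟩ ⟨i', u'⟩
      rfl
    rw [h, Matrix.det_submatrix_equiv_self]
  have hAunit : IsUnit A.det := by
    rw [hdetA]
    exact isUnit_iff_ne_zero.mpr hX
  have hAinv : Invertible A := A.invertibleOfIsUnitDet hAunit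
  have hAinvB : A⁻¹ * B = colB d Vb := by
    rw [← hAV, ← Matrix.mul_assoc, Matrix.nonsing_inv_mul A hAunit, Matrix.one_mul]
  -- Schur complement
  have hCV : C * colB d Vb = lam • ∑ i' : Fin d, Vb i' := by
    rw [hCdef, Xi_C, rowB_mul_colB]
    simp [smul_mul_assoc, Finset.smul_sum]
  have hSchur : D - C * (A⁻¹ * B) = Xi d (m+1)
      (μ + lam ^ 2 / (α * (α + ((d : ℂ) + 1) * lam)) *
        ((α + (d : ℂ) * lam) * (d : ℂ) * (μ + lam) - (d : ℂ) * lam))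
      (-(lam ^ 2 / (α * (α + ((d : ℂ) + 1) * lam)) *
        (α + lam - (d : ℂ) * lam * (μ + lam)))) := by
    rw [hAinvB, hCV, hsumV, hDdef, Xi_D, Xi, ← hj]
    match_scalars
    all_goals try ring1
    all_goals field_simp [hα0, show α + lam * ((d:ℂ) + 1) ≠ 0 by rwa [mul_comm]]
    all_goals (rw [hα]; ring1)
  -- assembly
  have hsplit : (Xi d (m+2) μ lam).det = (fromBlocks A B C D).det := by
    rw [← Matrix.det_submatrix_equiv_self (splitEquiv d m)]
    congr 1
    ext pq rs
    rcases pq with p | u <;> rcases rs with q' | v <;> rfl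
  have hfb : (fromBlocks A B C D).det = A.det * (D - C * (A⁻¹ * B)).det := by
    rw [Matrix.det_fromBlocks₁₁, Matrix.invOf_eq_nonsing_inv, Matrix.mul_assoc]
  show (Xi d (m+2) μ lam).det = _ * (Xi d (m+1) _ _).det
  rw [hsplit, hfb, hdetA, hSchur]

end ConeSubdivisionSchreier
end

section
/- Fix an integer d ≥ 2 and real numbers μ, λ with L = (d−1)λ − μ + 1 ≠ 0 and K = (d−1)λ² + (d−2)λμ − λ − μ² + 1 ≠ 0; define μ′ = μ + d·λ²·((d−1)λ² + (d−2)λμ − μ² + μ)/(L·K) and λ′ = λ²·(λ + μ − 1)/(L·K). For τ ∈ ℝ set Φ_τ(μ,λ) = μ² − 1 − (d−1)λμ − dλ² − τλ, and set A₁(μ,λ) = μ + λ − 1 and g(ζ) = ζ² − (d−1)ζ − (d+1). If θ, θ₀, θ₁ ∈ ℝ satisfy g(θ₀) = θ, g(θ₁) = θ and θ₀ ≠ θ₁, then Φ_θ(μ′, λ′) = A₁(μ,λ)·Φ_{θ₀}(μ,λ)·Φ_{θ₁}(μ,λ)/(L·K). -/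
set_option maxHeartbeats 1000000 in
private lemma Phi_aux (D th N M P R : ℝ) (hP : P ≠ 0)
    (h : N ^ 2 - P ^ 2 - (D - 1) * M * N - D * M ^ 2 - th * M * P = P * R) :
    (N / P) ^ 2 - 1 - (D - 1) * (M / P) * (N / P) - D * (M / P) ^ 2 - th * (M / P) = R / P := by
  have e : (N / P) ^ 2 - 1 - (D - 1) * (M / P) * (N / P) - D * (M / P) ^ 2 - th * (M / P)
      = (N ^ 2 - P ^ 2 - (D - 1) * M * N - D * M ^ 2 - th * M * P) / P ^ 2 := by
    field_simp
  rw [e, h, pow_two, mul_div_mul_left _ _ hP]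


set_option maxHeartbeats 1000000 in
/-- Behaviour of the quadratics `Φ_τ(μ,λ) = μ² - 1 - (d-1)λμ - dλ² - τλ` under the
renormalization map `F(μ,λ) = (μ',λ')`: if `g(θ₀) = g(θ₁) = θ` with `θ₀ ≠ θ₁`, where
`g(ζ) = ζ² - (d-1)ζ - (d+1)`, then `Φ_θ(μ',λ') = A₁(μ,λ)·Φ_{θ₀}(μ,λ)·Φ_{θ₁}(μ,λ)/(L·K)`. -/
theorem Phi_theta_renormalization (d : ℕ) (hd : 2 ≤ d) (μ lam : ℝ)
    (L K : ℝ)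
    (hL : L = ((d : ℝ) - 1) * lam - μ + 1)
    (hK : K = ((d : ℝ) - 1) * lam ^ 2 + ((d : ℝ) - 2) * lam * μ - lam - μ ^ 2 + 1)
    (hL0 : L ≠ 0) (hK0 : K ≠ 0)
    (μ' lam' : ℝ)
    (hμ' : μ' = μ + (d : ℝ) * lam ^ 2 *
      (((d : ℝ) - 1) * lam ^ 2 + ((d : ℝ) - 2) * lam * μ - μ ^ 2 + μ) / (L * K))
    (hlam' : lam' = lam ^ 2 * (lam + μ - 1) / (L * K))
    (Φ : ℝ → ℝ → ℝ → ℝ)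
    (hΦ : ∀ τ m l : ℝ, Φ τ m l = m ^ 2 - 1 - ((d : ℝ) - 1) * l * m - (d : ℝ) * l ^ 2 - τ * l)
    (A₁ : ℝ → ℝ → ℝ) (hA₁ : ∀ m l : ℝ, A₁ m l = m + l - 1)
    (g : ℝ → ℝ) (hg : ∀ z : ℝ, g z = z ^ 2 - ((d : ℝ) - 1) * z - ((d : ℝ) + 1))
    (θ θ₀ θ₁ : ℝ) (hθ₀ : g θ₀ = θ) (hθ₁ : g θ₁ = θ) (hne : θ₀ ≠ θ₁) :
    Φ θ μ' lam' = A₁ μ lam * Φ θ₀ μ lam * Φ θ₁ μ lam / (L * K) := by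
  have h := hθ₀.trans hθ₁.symm
  rw [hg, hg] at h
  have h2 : (θ₀ - θ₁) * (θ₀ + θ₁ - ((d : ℝ) - 1)) = 0 := by linear_combination h
  have hs : θ₀ + θ₁ = (d : ℝ) - 1 := by
    rcases mul_eq_zero.mp h2 with h3 | h3
    · exact absurd (sub_eq_zero.mp h3) hne
    · linarith
  have hp : θ₀ * θ₁ = -θ - ((d : ℝ) + 1) := by
    rw [← hθ₀, hg]; linear_combination θ₀ * hs
  have hprod : Φ θ₀ μ lam * Φ θ₁ μ lam
      = (μ ^ 2 - 1 - ((d : ℝ) - 1) * lam * μ - (d : ℝ) * lam ^ 2) ^ 2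
        - ((d : ℝ) - 1) * lam * (μ ^ 2 - 1 - ((d : ℝ) - 1) * lam * μ - (d : ℝ) * lam ^ 2)
        - (θ + (d : ℝ) + 1) * lam ^ 2 := by
    rw [hΦ, hΦ]
    linear_combination
      (-(lam * (μ ^ 2 - 1 - ((d : ℝ) - 1) * lam * μ - (d : ℝ) * lam ^ 2))) * hs
        + lam ^ 2 * hp
  have hLK : L * K ≠ 0 := mul_ne_zero hL0 hK0
  rw [hA₁, mul_assoc, hprod, hΦ]
  have hμN : μ' = (μ * (L * K) + (d : ℝ) * lam ^ 2 *
      (((d : ℝ) - 1) * lam ^ 2 + ((d : ℝ) - 2) * lam * μ - μ ^ 2 + μ)) / (L * K) := by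
    rw [hμ']; field_simp
  have hlamM : lam' = lam ^ 2 * (lam + μ - 1) / (L * K) := hlam'
  rw [hμN, hlamM]
  refine Phi_aux ((d : ℝ)) θ _ _ _ _ hLK ?_
  subst hL hK
  ring
end

section
/- Let d ≥ 2 be an integer and set c = (d+1)d/2 − (d+1) ∈ ℚ. Suppose α, β, σ : ℕ → ℚ satisfy: α 1 = d; β 1 = 0; for all n ≥ 2, β n = (c+1)·(d+1)^{n−2} + β (n−1) and α n = c·(d+1)^{n−2} + σ n + α (n−1) + 1; σ 2 = 0; and for all n ≥ 3, σ n = ∑_{k=1}^{n−2} 2^{k−1}·α (n−1−k) + ∑_{k=1}^{n−3} 2^{k−1}·β (n−1−k). Then for all n ≥ 2: σ n = (d+1)^{n−2} − 1; and for all n ≥ 1: β n = ((d−1)/2)·((d+1)^{n−1} − 1) and α n = β n + d. -/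
private lemma step_sum (f : ℕ → ℚ) (N a : ℕ) :
    (∑ k ∈ Finset.Icc 1 (N+1), (2:ℚ)^(k-1) * f (a-k)) =
      f (a-1) + 2 * ∑ k ∈ Finset.Icc 1 N, (2:ℚ)^(k-1) * f (a-1-k) := by
  rw [← Finset.Ico_add_one_right_eq_Icc, ← Finset.Ico_add_one_right_eq_Icc, Finset.sum_Ico_eq_sum_range,
    Finset.sum_Ico_eq_sum_range]
  simp only [Nat.add_sub_cancel]
  rw [Finset.sum_range_succ', Finset.mul_sum, add_comm]
  congr 1
  · show (2:ℚ)^(1+0-1) * f (a-(1+0)) = f (a-1)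
    norm_num
  · apply Finset.sum_congr rfl
    intro i _
    rw [show 1+(i+1)-1 = i+1 by omega, show a-(1+(i+1)) = a-1-(1+i) by omega,
        show 1+i-1 = i by omega, pow_succ]
    ring


/-- Closed forms for the multiplicity sequences `α_n`, `β_n` and the auxiliary exponent
sequence `σ_n` in the factorization of the determinants `D_n` for the cone subdivision:
with `c = (d+1)d/2 - (d+1)` and the stated recurrences and initial values, one has
`σ n = (d+1)^(n-2) - 1` for `n ≥ 2`, and `β n = ((d-1)/2)((d+1)^(n-1) - 1)`,
`α n = β n + d` for `n ≥ 1`. -/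
theorem multiplicity_sequences_closed_form (d : ℕ) (hd : 2 ≤ d)
    (c : ℚ) (hc : c = ((d : ℚ) + 1) * (d : ℚ) / 2 - ((d : ℚ) + 1))
    (α β σ : ℕ → ℚ)
    (hα1 : α 1 = (d : ℚ)) (hβ1 : β 1 = 0)
    (hβrec : ∀ n, 2 ≤ n → β n = (c + 1) * ((d : ℚ) + 1) ^ (n - 2) + β (n - 1))
    (hαrec : ∀ n, 2 ≤ n → α n = c * ((d : ℚ) + 1) ^ (n - 2) + σ n + α (n - 1) + 1)
    (hσ2 : σ 2 = 0)
    (hσrec : ∀ n, 3 ≤ n → σ n =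
      (∑ k ∈ Finset.Icc 1 (n - 2), 2 ^ (k - 1) * α (n - 1 - k)) +
      (∑ k ∈ Finset.Icc 1 (n - 3), 2 ^ (k - 1) * β (n - 1 - k))) :
    (∀ n, 2 ≤ n → σ n = ((d : ℚ) + 1) ^ (n - 2) - 1) ∧
    (∀ n, 1 ≤ n →
      β n = (((d : ℚ) - 1) / 2) * (((d : ℚ) + 1) ^ (n - 1) - 1) ∧
      α n = β n + (d : ℚ)) := by
  have hB : ∀ n, 1 ≤ n → β n = (((d:ℚ)-1)/2) * (((d:ℚ)+1)^(n-1) - 1) := by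
    intro n hn
    induction n, hn using Nat.le_induction with
    | base => norm_num [hβ1]
    | succ n hn ih =>
      rw [hβrec (n+1) (by omega), show n+1-2 = n-1 by omega, show n+1-1 = n by omega, ih]
      obtain ⟨m, rfl⟩ := Nat.exists_eq_add_of_le hn
      rw [show 1+m-1 = m by omega, show 1+m = m+1 by omega, pow_succ, hc]
      ring
  have hσ3 : σ 3 = (d:ℚ) := by
    rw [hσrec 3 (by norm_num), show (3:ℕ)-2 = 1 by omega, show (3:ℕ)-3 = 0 by omega,
      Finset.Icc_self, Finset.sum_singleton, show Finset.Icc 1 0 = (∅ : Finset ℕ) by decide]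
    norm_num [hα1]
  have hS4 : ∀ m : ℕ, σ (m+4) = α (m+2) + β (m+2) + 2 * σ (m+3) := by
    intro m
    rw [hσrec (m+4) (by omega), hσrec (m+3) (by omega),
      show m+4-2 = m+1+1 by omega, show m+4-1 = m+1+2 by omega, show m+4-3 = m+1 by omega,
      show m+3-2 = m+1 by omega, show m+3-1 = m+2 by omega, show m+3-3 = m by omega,
      step_sum α (m+1) (m+1+2), step_sum β m (m+1+2), show m+1+2-1 = m+2 by omega]
    ring
  have main : ∀ n, (2 ≤ n → σ n = ((d:ℚ)+1)^(n-2) - 1) ∧ (1 ≤ n → α n = β n + (d:ℚ)) := by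
    intro n
    induction n using Nat.strong_induction_on with
    | _ n ih =>
      have hσn : 2 ≤ n → σ n = ((d:ℚ)+1)^(n-2) - 1 := by
        intro h2
        rcases Nat.lt_or_ge n 4 with h4 | h4
        · interval_cases n
          · rw [hσ2]; norm_num
          · rw [hσ3]; norm_num
        · obtain ⟨m, rfl⟩ := Nat.exists_eq_add_of_le h4
          rw [show 4+m = m+4 by omega, hS4 m,
            (ih (m+3) (by omega)).1 (by omega),
            (ih (m+2) (by omega)).2 (by omega),
            hB (m+2) (by omega),
            show m+3-2 = m+1 by omega, show m+4-2 = m+2 by omega,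
            show m+2-1 = m+1 by omega, pow_succ ((d:ℚ)+1) (m+1)]
          ring
      refine ⟨hσn, ?_⟩
      intro h1
      rcases Nat.lt_or_ge n 2 with h2 | h2
      · interval_cases n
        rw [hα1, hβ1]; ring
      · have ihα := (ih (n-1) (by omega)).2 (by omega)
        rw [hαrec n h2, hσn h2, ihα, hβrec n h2]
        ring
  exact ⟨fun n hn => (main n).1 hn, fun n hn => ⟨hB n hn, (main n).2 hn⟩⟩
end

section
/- Let d ≥ 2 be an integer and g : ℝ → ℝ the map g(ζ) = ζ² − (d−1)ζ − (d+1). Then for every integer n ≥ 1, the n-fold iterate satisfies g^[n](0) ≠ 0 and g^[n](0) ≠ −2. -/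
/-- For `d ≥ 2` and the spectral decimation polynomial `g(ζ) = ζ² - (d-1)ζ - (d+1)`, the
forward orbit of `0` never returns to `0` and never hits `-2`: for every `n ≥ 1`,
`g^[n](0) ≠ 0` and `g^[n](0) ≠ -2`. -/
theorem g_orbit_of_zero_avoids (d : ℕ) (hd : 2 ≤ d)
    (g : ℝ → ℝ) (hg : ∀ z : ℝ, g z = z ^ 2 - ((d : ℝ) - 1) * z - ((d : ℝ) + 1)) :
    ∀ n : ℕ, 1 ≤ n → g^[n] 0 ≠ 0 ∧ g^[n] 0 ≠ -2 := by
  have hD : (2:ℝ) ≤ (d:ℝ) := by exact_mod_cast hd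
  have h1 : g^[1] 0 = -((d:ℝ)+1) := by rw [Function.iterate_one, hg]; ring
  have key : ∀ n : ℕ, 2 ≤ n → (d:ℝ) + 1 < g^[n] 0 := by
    intro n hn
    induction n with
    | zero => omega
    | succ m ih =>
      rcases Nat.lt_or_ge m 2 with hm | hm
      · interval_cases m
        · omega
        · rw [Function.iterate_succ_apply', h1, hg]
          nlinarith
      · rw [Function.iterate_succ_apply', hg]
        have := ih hm
        nlinarith
  intro n hn
  rcases Nat.lt_or_ge n 2 with h | h
  · interval_cases n
    rw [h1]
    constructor <;> intro h <;> nlinarith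
  · have := key n h
    constructor <;> intro h <;> rw [h] at this <;> nlinarith
end

section
/- Let d ≥ 2 be an integer and g : ℝ → ℝ the map g(ζ) = ζ² − (d−1)ζ − (d+1). For i ∈ ℕ define the real preimage sets 𝒜_i = {x : ℝ | g^[i](x) = 0} and ℬ_i = {x : ℝ | g^[i](x) = −2}. Then the family {𝒜_i, ℬ_j | i, j ∈ ℕ} is mutually disjoint; that is: (i) for all i, j ∈ ℕ, 𝒜_i ∩ ℬ_j = ∅; (ii) if i ≠ j then 𝒜_i ∩ 𝒜_j = ∅; (iii) if i ≠ j then ℬ_i ∩ ℬ_j = ∅. -/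
/-- Mutual disjointness of the eigenvalue generations of the limiting spectrum: for
`d ≥ 2`, `g(ζ) = ζ² - (d-1)ζ - (d+1)`, `𝒜_i = g^{-i}(0)` and `ℬ_i = g^{-i}(-2)`, the
family `{𝒜_i, ℬ_j}` is mutually disjoint. -/
theorem eigenvalue_generations_disjoint (d : ℕ) (hd : 2 ≤ d)
    (g : ℝ → ℝ) (hg : ∀ z : ℝ, g z = z ^ 2 - ((d : ℝ) - 1) * z - ((d : ℝ) + 1))
    (A B : ℕ → Set ℝ)
    (hA : ∀ i, A i = {x : ℝ | g^[i] x = 0})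
    (hB : ∀ i, B i = {x : ℝ | g^[i] x = -2}) :
    (∀ i j : ℕ, A i ∩ B j = ∅) ∧
    (∀ i j : ℕ, i ≠ j → A i ∩ A j = ∅) ∧
    (∀ i j : ℕ, i ≠ j → B i ∩ B j = ∅) := by
  have hD : (2:ℝ) ≤ (d:ℝ) := by exact_mod_cast hd
  have h1 : g 0 = -((d:ℝ)+1) := by rw [hg]; ring
  have h2 : g (-2) = (d:ℝ)+1 := by rw [hg]; ring
  have hfix : g ((d:ℝ)+1) = (d:ℝ)+1 := by rw [hg]; ring
  have hmono : ∀ y : ℝ, (d:ℝ)+1 < y → (d:ℝ)+1 < g y := by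
    intro y hy
    have h : g y - y = (y - ((d:ℝ)+1)) * (y + 1) := by rw [hg]; ring
    nlinarith
  -- orbit of -2 is fixed at d+1 from step 1 onward
  have hBk : ∀ k, 1 ≤ k → g^[k] (-2 : ℝ) = (d:ℝ)+1 := by
    intro k hk
    induction k with
    | zero => omega
    | succ n ih =>
      rcases Nat.eq_or_lt_of_le hk with h | h
      · simp [← h, h2]
      · have hn : 1 ≤ n := by omega
        rw [Function.iterate_succ_apply', ih hn, hfix]
  -- orbit of 0 is above d+1 from step 2 onward
  have hAk : ∀ k, 2 ≤ k → (d:ℝ)+1 < g^[k] (0 : ℝ) := by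
    intro k hk
    induction k with
    | zero => omega
    | succ n ih =>
      rcases Nat.eq_or_lt_of_le hk with h | h
      · have : g^[2] (0:ℝ) = g (g 0) := by
          rw [Function.iterate_succ_apply', Function.iterate_one]
        have hval : g (-((d:ℝ)+1)) = ((d:ℝ)+1) * (2*(d:ℝ) - 1) := by rw [hg]; ring
        rw [← h, this, h1, hval]
        nlinarith
      · have hn : 2 ≤ n := by omega
        rw [Function.iterate_succ_apply']
        exact hmono _ (ih hn)
  have hd3 : (3:ℝ) ≤ (d:ℝ)+1 := by linarith
  -- orbit facts
  have hA0 : ∀ k, g^[k] (0:ℝ) ≠ -2 := by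
    intro k
    match k with
    | 0 => norm_num
    | 1 => simp only [Function.iterate_one, h1]; intro h; linarith
    | (n+2) =>
      have := hAk (n+2) (by omega)
      intro h; rw [h] at this; linarith
  have hA0' : ∀ k, 1 ≤ k → g^[k] (0:ℝ) ≠ 0 := by
    intro k hk
    match k with
    | 1 => simp only [Function.iterate_one, h1]; intro h; linarith
    | (n+2) =>
      have := hAk (n+2) (by omega)
      intro h; rw [h] at this; linarith
  have hB0 : ∀ k, g^[k] (-2:ℝ) ≠ 0 := by
    intro k
    match k with
    | 0 => norm_num
    | (n+1) =>
      rw [hBk (n+1) (by omega)]; intro h; linarith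
  have hB0' : ∀ k, 1 ≤ k → g^[k] (-2:ℝ) ≠ -2 := by
    intro k hk
    match k with
    | (n+1) =>
      rw [hBk (n+1) (by omega)]; intro h; linarith
  -- iterate splitting
  have hsplit : ∀ (i j : ℕ) (x : ℝ), i ≤ j → g^[j] x = g^[j-i] (g^[i] x) := by
    intro i j x hij
    rw [← Function.iterate_add_apply, Nat.sub_add_cancel hij]
  refine ⟨?_, ?_, ?_⟩
  · intro i j
    rw [Set.eq_empty_iff_forall_notMem]
    intro x hx
    simp only [hA, hB] at hx
    obtain ⟨hxa, hxb⟩ := hx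
    simp only [Set.mem_setOf_eq] at hxa hxb
    rcases le_or_gt i j with h | h
    · exact hA0 (j - i) (by rw [hsplit i j x h, hxa] at hxb; exact hxb)
    · exact hB0 (i - j) (by rw [hsplit j i x h.le, hxb] at hxa; exact hxa)
  · intro i j hij
    rw [Set.eq_empty_iff_forall_notMem]
    intro x hx
    simp only [hA] at hx
    obtain ⟨hxa, hxb⟩ := hx
    simp only [Set.mem_setOf_eq] at hxa hxb
    rcases lt_or_gt_of_ne hij with h | h
    · exact hA0' (j - i) (by omega) (by rw [hsplit i j x h.le, hxa] at hxb; exact hxb)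
    · exact hA0' (i - j) (by omega) (by rw [hsplit j i x h.le, hxb] at hxa; exact hxa)
  · intro i j hij
    rw [Set.eq_empty_iff_forall_notMem]
    intro x hx
    simp only [hB] at hx
    obtain ⟨hxa, hxb⟩ := hx
    simp only [Set.mem_setOf_eq] at hxa hxb
    rcases lt_or_gt_of_ne hij with h | h
    · exact hB0' (j - i) (by omega) (by rw [hsplit i j x h.le, hxa] at hxb; exact hxb)
    · exact hB0' (i - j) (by omega) (by rw [hsplit j i x h.le, hxb] at hxa; exact hxa)
end

section
/- Let d ≥ 2 be an integer and g : ℝ → ℝ the map g(ζ) = ζ² − (d−1)ζ − (d+1). Then for every t ∈ [−2, d+1] and every n ∈ ℕ, the set {x : ℝ | g^[n](x) = t} is finite, has exactly 2^n elements, and is contained in the interval [−2, d+1]. (In particular each of the eigenvalue sets g^{-n}(0) and g^{-n}(−2) has exactly 2^n elements, i.e. all roots of the corresponding generation are simple.) -/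
lemma quad_solutions (d : ℕ) (hd : 2 ≤ d) (y : ℝ)
    (hy : y ∈ Set.Icc (-2 : ℝ) ((d : ℝ) + 1)) :
    ∃ a b : ℝ, a ≠ b ∧ a ∈ Set.Icc (-2 : ℝ) ((d : ℝ) + 1) ∧
      b ∈ Set.Icc (-2 : ℝ) ((d : ℝ) + 1) ∧
      ∀ z : ℝ, z ^ 2 - ((d : ℝ) - 1) * z - ((d : ℝ) + 1) = y ↔ z = a ∨ z = b := by
  obtain ⟨hy1, hy2⟩ := hy
  have hd' : (2 : ℝ) ≤ (d : ℝ) := by exact_mod_cast hd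
  set s : ℝ := (((d : ℝ) - 1) / 2) ^ 2 + ((d : ℝ) + 1) + y with hs_def
  have hs : 0 < s := by rw [hs_def]; nlinarith [sq_nonneg (((d : ℝ) - 1) / 2)]
  have hsq : Real.sqrt s ^ 2 = s := Real.sq_sqrt hs.le
  have hsqrt_pos : 0 < Real.sqrt s := Real.sqrt_pos.2 hs
  have hsle : Real.sqrt s ≤ ((d : ℝ) + 3) / 2 := by
    have h1 : s ≤ (((d : ℝ) + 3) / 2) ^ 2 := by rw [hs_def]; nlinarith
    calc Real.sqrt s ≤ Real.sqrt ((((d : ℝ) + 3) / 2) ^ 2) := Real.sqrt_le_sqrt h1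
      _ = ((d : ℝ) + 3) / 2 := by
          rw [Real.sqrt_sq (by linarith : (0:ℝ) ≤ ((d : ℝ) + 3) / 2)]
  refine ⟨((d : ℝ) - 1) / 2 + Real.sqrt s, ((d : ℝ) - 1) / 2 - Real.sqrt s, by linarith,
    ⟨by nlinarith [Real.sqrt_nonneg s], by linarith⟩,
    ⟨by linarith, by nlinarith [Real.sqrt_nonneg s]⟩, ?_⟩
  intro z
  have key : z ^ 2 - ((d : ℝ) - 1) * z - ((d : ℝ) + 1) - y
      = (z - (((d : ℝ) - 1) / 2 + Real.sqrt s)) * (z - (((d : ℝ) - 1) / 2 - Real.sqrt s)) := by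
    linear_combination hsq + hs_def
  constructor
  · intro h
    have h0 : (z - (((d : ℝ) - 1) / 2 + Real.sqrt s)) * (z - (((d : ℝ) - 1) / 2 - Real.sqrt s)) = 0 := by
      rw [← key]; linarith
    rcases mul_eq_zero.1 h0 with h' | h'
    · left; linarith
    · right; linarith
  · rintro (rfl | rfl) <;> linear_combination key

/-- For `d ≥ 2`, `g(ζ) = ζ² - (d-1)ζ - (d+1)` and `t ∈ [-2, d+1]`, the set of real
solutions of `g^[n](x) = t` is finite, has exactly `2^n` elements, and is contained in
`[-2, d+1]`. In particular each eigenvalue generation `g^{-n}(0)`, `g^{-n}(-2)` consists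
of exactly `2^n` simple roots. -/
theorem preimage_iterate_card (d : ℕ) (hd : 2 ≤ d)
    (g : ℝ → ℝ) (hg : ∀ z : ℝ, g z = z ^ 2 - ((d : ℝ) - 1) * z - ((d : ℝ) + 1))
    (t : ℝ) (ht : t ∈ Set.Icc (-2 : ℝ) ((d : ℝ) + 1)) (n : ℕ) :
    {x : ℝ | g^[n] x = t}.Finite ∧
    {x : ℝ | g^[n] x = t}.ncard = 2 ^ n ∧
    {x : ℝ | g^[n] x = t} ⊆ Set.Icc (-2 : ℝ) ((d : ℝ) + 1) := by
  induction n generalizing t with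
  | zero =>
    have h0 : {x : ℝ | g^[0] x = t} = {t} := by ext x; simp
    rw [h0]
    exact ⟨Set.finite_singleton t, by simp, by simpa using ht⟩
  | succ n ih =>
    obtain ⟨a, b, hab, ha, hb, hiff⟩ := quad_solutions d hd t ht
    have hset : {x : ℝ | g^[n+1] x = t}
        = {x : ℝ | g^[n] x = a} ∪ {x : ℝ | g^[n] x = b} := by
      ext x
      simp only [Set.mem_setOf_eq, Set.mem_union, Function.iterate_succ_apply']
      rw [hg (g^[n] x)]
      exact hiff _
    obtain ⟨hfa, hca, hsa⟩ := ih a ha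
    obtain ⟨hfb, hcb, hsb⟩ := ih b hb
    have hdisj : Disjoint {x : ℝ | g^[n] x = a} {x : ℝ | g^[n] x = b} := by
      rw [Set.disjoint_left]
      intro x hx hx'
      exact hab (hx ▸ hx' ▸ rfl)
    rw [hset]
    refine ⟨hfa.union hfb, ?_, Set.union_subset hsa hsb⟩
    rw [Set.ncard_union_eq hdisj hfa hfb, hca, hcb]
    ring
end
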